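/- For every τ with 0 ≤ τ ≤ 1, the matrix diag(1,0) lies in the closure of the Ψ₁-orbit {c·P*·M(τ)·P : |c| = 1, P ∈ GL₂(ℂ)} of the matrix M(τ) with rows (0,1) and (τ,0). Moreover, the matrix diag(1,−1) lies in the closure of the Ψ₁-orbit of the matrix N with rows (0,1) and (1,i). -/

import Mathlib

open Matrix Filter Topology

private lemma mem_orbit_one (τ : ℝ) (a : ℝ) (ha : (a:ℂ) * a * (1 + τ) = 1) (ha0 : a ≠ 0)
    (δ : ℝ) (hδ : 0 < δ) :
    (Matrix.diagonal ![(1:ℂ),0] + (δ:ℂ) • !![0, (a:ℂ); (τ:ℂ)*a, 0]) ∈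
      {X : Matrix (Fin 2) (Fin 2) ℂ |
        ∃ (c : ℂ) (P : Matrix (Fin 2) (Fin 2) ℂ), ‖c‖ = 1 ∧ IsUnit P ∧
          X = c • (Pᴴ * !![(0 : ℂ), 1; (τ : ℂ), 0] * P)} := by
  refine ⟨1, !![(a:ℂ), 0; (a:ℂ), (δ:ℂ)], by simp, ?_, ?_⟩
  · rw [Matrix.isUnit_iff_isUnit_det]
    simp [Matrix.det_fin_two_of, hδ.ne', ha0]
  · ext i j
    fin_cases i <;> fin_cases j <;>
      simp [Matrix.mul_apply, Fin.sum_univ_two, Matrix.conjTranspose_apply,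
        Matrix.diagonal_apply, Complex.conj_ofReal] <;>
      ring_nf
    · linear_combination -ha

private lemma mem_orbit_two (δ : ℝ) (hδ : 0 < δ) :
    (Matrix.diagonal ![(1:ℂ),-1] + ((δ:ℂ)^2) • !![Complex.I, -Complex.I; -Complex.I, Complex.I]) ∈
      {X : Matrix (Fin 2) (Fin 2) ℂ |
        ∃ (c : ℂ) (P : Matrix (Fin 2) (Fin 2) ℂ), ‖c‖ = 1 ∧ IsUnit P ∧
          X = c • (Pᴴ * !![(0 : ℂ), 1; 1, Complex.I] * P)} := by
  have hδ' : (δ:ℂ) ≠ 0 := by exact_mod_cast hδ.ne'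
  refine ⟨1, !![((2*δ:ℝ):ℂ)⁻¹, ((2*δ:ℝ):ℂ)⁻¹; (δ:ℂ), -(δ:ℂ)], by simp, ?_, ?_⟩
  · rw [Matrix.isUnit_iff_isUnit_det]
    rw [Matrix.det_fin_two_of]
    have : (((2*δ:ℝ):ℂ)⁻¹ * -(δ:ℂ) - ((2*δ:ℝ):ℂ)⁻¹ * (δ:ℂ)) = -1 := by
      push_cast
      field_simp
      ring
    rw [this]; simp
  · ext i j
    fin_cases i <;> fin_cases j <;>
      simp [Matrix.mul_apply, Fin.sum_univ_two, Matrix.conjTranspose_apply,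
        Matrix.diagonal_apply, Complex.conj_ofReal, map_ofNat] <;>
      field_simp <;> ring

private lemma tendsto_pert (D E : Matrix (Fin 2) (Fin 2) ℂ) (c : ℕ → ℂ)
    (hc : Tendsto c atTop (𝓝 0)) :
    Tendsto (fun n : ℕ => D + c n • E) atTop (𝓝 D) := by
  have := (hc.smul_const E).const_add D
  simpa using this

private lemma tendsto_inv_nat : Tendsto (fun n : ℕ => ((((n:ℝ)+1)⁻¹ : ℝ) : ℂ)) atTop (𝓝 0) := by
  have h : Tendsto (fun n : ℕ => ((n:ℝ)+1)⁻¹) atTop (𝓝 0) := by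
    simpa [one_div] using tendsto_one_div_add_atTop_nhds_zero_nat (𝕜 := ℝ)
  have := (Complex.continuous_ofReal.tendsto 0).comp h
  simpa [Function.comp_def] using this

/-- For `0 ≤ τ ≤ 1`, the matrix `diag(1,0)` lies in the closure of the
`Ψ₁`-orbit of `M(τ) = [[0,1],[τ,0]]`; moreover `diag(1,−1)` lies in the closure of the
`Ψ₁`-orbit of `N = [[0,1],[1,i]]`. -/
theorem closure_orbit_paths (τ : ℝ) (h0 : 0 ≤ τ) (h1 : τ ≤ 1) :
    ((Matrix.diagonal ![(1 : ℂ), 0]) ∈ closure {X : Matrix (Fin 2) (Fin 2) ℂ |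
        ∃ (c : ℂ) (P : Matrix (Fin 2) (Fin 2) ℂ), ‖c‖ = 1 ∧ IsUnit P ∧
          X = c • (Pᴴ * !![(0 : ℂ), 1; (τ : ℂ), 0] * P)}) ∧
    ((Matrix.diagonal ![(1 : ℂ), -1]) ∈ closure {X : Matrix (Fin 2) (Fin 2) ℂ |
        ∃ (c : ℂ) (P : Matrix (Fin 2) (Fin 2) ℂ), ‖c‖ = 1 ∧ IsUnit P ∧
          X = c • (Pᴴ * !![(0 : ℂ), 1; 1, Complex.I] * P)}) := by
  constructor
  · -- part 1
    set a : ℝ := (Real.sqrt (1+τ))⁻¹ with ha_def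
    have hpos : (0:ℝ) < 1 + τ := by linarith
    have hs : Real.sqrt (1+τ) * Real.sqrt (1+τ) = 1+τ := Real.mul_self_sqrt hpos.le
    have hsne : Real.sqrt (1+τ) ≠ 0 := by positivity
    have haR : a * a * (1+τ) = 1 := by
      rw [ha_def]; field_simp; rw [sq, hs]
    have ha : (a:ℂ) * a * (1 + τ) = 1 := by exact_mod_cast congrArg Complex.ofReal haR
    have ha0 : a ≠ 0 := by rw [ha_def]; positivity
    apply mem_closure_of_tendsto
      (tendsto_pert _ !![0, (a:ℂ); (τ:ℂ)*a, 0] _ tendsto_inv_nat)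
    filter_upwards with n
    exact mem_orbit_one τ a ha ha0 _ (by positivity)
  · -- part 2
    have hc : Tendsto (fun n : ℕ => ((((n:ℝ)+1)⁻¹ : ℝ) : ℂ)^2) atTop (𝓝 0) := by
      simpa using tendsto_inv_nat.pow 2
    apply mem_closure_of_tendsto
      (tendsto_pert _ !![Complex.I, -Complex.I; -Complex.I, Complex.I] _ hc)
    filter_upwards with n
    exact mem_orbit_two _ (by positivity)
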